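/- Let T be a ℚ-weighted lattice tile whose weights w : ℤ×ℤ → ℚ are supported in ℕ×ℕ and whose weighted area ∑ w_{ij} is nonzero. Let f_T = ∑ w_{ij}X^iY^j(X−1)(Y−1) ∈ ℚ[X,Y], let m be the degree of f_T in X and n its degree in Y. If α, β ∈ ℂ^× satisfy f_T(α^k, β^k) = 0 for every integer k ≥ 1, then either α^k = 1 for some 1 ≤ k ≤ 2mn or β^k = 1 for some 1 ≤ k ≤ 2mn. -/

import Mathlib

open Finset MvPolynomial

/-- The polynomial `f_T = ∑ w_{ij} X^i Y^j (X-1)(Y-1) ∈ ℚ[X,Y]` of a ℚ-weighted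
lattice tile with weights `w` supported in `ℕ × ℕ` (here `X = X 0`, `Y = X 1`). -/
noncomputable def firstQuadrantPolyQ (w : ℤ × ℤ →₀ ℚ) : MvPolynomial (Fin 2) ℚ :=
  w.sum fun ij a =>
    C a * X 0 ^ ij.1.toNat * X 1 ^ ij.2.toNat * (X 0 - 1) * (X 1 - 1)

private noncomputable def gpoly (w : ℤ × ℤ →₀ ℚ) : MvPolynomial (Fin 2) ℚ :=
  w.sum fun ij a => C a * X 0 ^ ij.1.toNat * X 1 ^ ij.2.toNat

private lemma fq_eq (w : ℤ × ℤ →₀ ℚ) :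
    firstQuadrantPolyQ w = gpoly w * ((X 0 - 1) * (X 1 - 1)) := by
  rw [firstQuadrantPolyQ, gpoly, Finsupp.sum_mul]
  exact Finsupp.sum_congr fun ij _ => by ring

private lemma eval_one_gpoly (w : ℤ × ℤ →₀ ℚ) :
    eval (fun _ => 1) (gpoly w) = w.sum fun _ a => a := by
  rw [gpoly, map_finsuppSum]
  exact Finsupp.sum_congr fun ij _ => by simp

private lemma eval_one_eq_sum (g : MvPolynomial (Fin 2) ℚ) :
    eval (fun _ => 1) g = ∑ d ∈ g.support, coeff d g := by
  rw [eval_eq]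
  exact Finset.sum_congr rfl fun d _ => by simp

private lemma gpoly_ne_zero (w : ℤ × ℤ →₀ ℚ) (harea : (w.sum fun _ a => a) ≠ 0) :
    gpoly w ≠ 0 := fun h => harea (by rw [← eval_one_gpoly, h, map_zero])

-- existence of a monomial of f with both exponents ≥ 1
private lemma exists_corner (w : ℤ × ℤ →₀ ℚ) (harea : (w.sum fun _ a => a) ≠ 0) :
    ∃ e ∈ (firstQuadrantPolyQ w).support, 1 ≤ e 0 ∧ 1 ≤ e 1 := by
  set g := gpoly w with hg
  have hgne : g.support.Nonempty := by
    rw [Finset.nonempty_iff_ne_empty, Ne, MvPolynomial.support_eq_empty]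
    exact gpoly_ne_zero w harea
  obtain ⟨d, hd, hdmax⟩ := Finset.exists_max_image g.support
    (fun d => toLex ((d 1 : ℕ), (d 0 : ℕ))) hgne
  set e : Fin 2 →₀ ℕ := d + Finsupp.single 0 1 + Finsupp.single 1 1 with he
  have hnot : ∀ d' : Fin 2 →₀ ℕ, d' ∈ g.support →
      (d 1 < d' 1 ∨ (d 1 = d' 1 ∧ d 0 < d' 0)) → False := by
    intro d' hd' hlt
    have := hdmax d' hd'
    rw [Prod.Lex.le_iff] at this
    rcases hlt with h | ⟨h1, h2⟩ <;> rcases this with h' | ⟨h1', h2'⟩ <;> simp_all <;> omega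
  have hcoeff : coeff e (firstQuadrantPolyQ w) = coeff d g := by
    have hexp : firstQuadrantPolyQ w = g * (X 0 * X 1) - g * X 0 - g * X 1 + g := by
      rw [fq_eq w, ← hg]; ring
    rw [hexp]
    simp only [coeff_add, coeff_sub]
    have c1 : coeff e (g * (X 0 * X 1)) = coeff d g := by
      rw [← mul_assoc]
      have : e = d + Finsupp.single 0 1 + Finsupp.single 1 1 := he
      rw [this, coeff_mul_X, coeff_mul_X]
    have c2 : coeff e (g * X 0) = 0 := by
      have : e = (d + Finsupp.single 1 1) + Finsupp.single 0 1 := by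
        rw [he]; abel
      rw [this, coeff_mul_X]
      rw [← notMem_support_iff]
      intro hmem
      exact hnot _ hmem (by simp [Finsupp.add_apply, Finsupp.single_apply])
    have c3 : coeff e (g * X 1) = 0 := by
      rw [he, coeff_mul_X]
      rw [← notMem_support_iff]
      intro hmem
      exact hnot _ hmem (by simp [Finsupp.add_apply, Finsupp.single_apply])
    have c4 : coeff e g = 0 := by
      rw [← notMem_support_iff]
      intro hmem
      exact hnot _ hmem (by rw [he]; simp [Finsupp.add_apply, Finsupp.single_apply])
    rw [c1, c2, c3, c4]; ring
  refine ⟨e, ?_, ?_, ?_⟩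
  · rw [mem_support_iff, hcoeff]
    exact mem_support_iff.1 hd
  · rw [he]; simp [Finsupp.add_apply, Finsupp.single_apply]
  · rw [he]; simp [Finsupp.add_apply, Finsupp.single_apply]

private lemma zpow_ne_one_q {t : ℚ} (ht : 1 < t) {k : ℤ} (hk : k ≠ 0) : t ^ k ≠ 1 := by
  rcases lt_trichotomy k 0 with h | h | h
  · intro heq
    have h1 : (1 : ℚ) < t ^ (-k) := one_lt_zpow₀ ht (by omega)
    rw [zpow_neg, heq] at h1; norm_num at h1
  · exact absurd h hk
  · intro heq
    have h1 : (1 : ℚ) < t ^ k := one_lt_zpow₀ ht h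
    rw [heq] at h1; norm_num at h1

private lemma parallel_contradiction (w : ℤ × ℤ →₀ ℚ)
    (harea : (w.sum fun _ a => a) ≠ 0) (i j : ℤ) (hi : i ≠ 0) (hj : j ≠ 0)
    (hsum : ∀ q : ℤ, ∑ s ∈ (firstQuadrantPolyQ w).support.filter
      (fun s => (s 0 : ℤ) * j - (s 1 : ℤ) * i = q), coeff s (firstQuadrantPolyQ w) = 0) :
    False := by
  set f := firstQuadrantPolyQ w with hf
  set g := gpoly w with hg
  set ψ : (Fin 2 →₀ ℕ) → ℤ := fun s => (s 0 : ℤ) * j - (s 1 : ℤ) * i with hψ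
  -- Step A : scalar level sums over f vanish
  have stepA : ∀ t : ℚ, ∑ s ∈ f.support, coeff s f * t ^ (ψ s) = 0 := by
    intro t
    rw [← Finset.sum_fiberwise_of_maps_to (g := ψ) (t := f.support.image ψ)
      (fun s hs => Finset.mem_image_of_mem _ hs) (fun s => coeff s f * t ^ ψ s)]
    refine Finset.sum_eq_zero fun q _ => ?_
    have hre : ∑ s ∈ f.support.filter (fun s => ψ s = q), coeff s f * t ^ ψ s
        = (∑ s ∈ f.support.filter (fun s => ψ s = q), coeff s f) * t ^ q := by
      rw [Finset.sum_mul]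
      exact Finset.sum_congr rfl fun s hs => by rw [(Finset.mem_filter.1 hs).2]
    rw [hre, hsum q, zero_mul]
  -- Step B : for t > 1 the g-level sum vanishes
  have stepB : ∀ t : ℚ, 1 < t → ∑ d ∈ g.support, coeff d g * t ^ (ψ d) = 0 := by
    intro t ht
    have ht0 : t ≠ 0 := by positivity
    set v : Fin 2 → ℚ := ![t ^ j, t ^ (-i)] with hv
    have hev : ∀ p : MvPolynomial (Fin 2) ℚ,
        eval v p = ∑ d ∈ p.support, coeff d p * t ^ ψ d := by
      intro p
      rw [eval_eq']
      refine Finset.sum_congr rfl fun d _ => ?_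
      rw [Fin.prod_univ_two]
      have hvv : v 0 ^ d 0 * v 1 ^ d 1 = t ^ ψ d := by
        show (t ^ j) ^ (d 0 : ℕ) * (t ^ (-i)) ^ (d 1 : ℕ) = t ^ ψ d
        rw [← zpow_natCast (t ^ j), ← zpow_natCast (t ^ (-i)), ← zpow_mul, ← zpow_mul,
          ← zpow_add₀ ht0]
        congr 1
        simp only [hψ]; ring
      rw [hvv]
    have hfactor : eval v f = eval v g * ((t ^ j - 1) * (t ^ (-i) - 1)) := by
      rw [hf, fq_eq w, ← hg, map_mul, map_mul, map_sub, map_sub, eval_X, eval_X, map_one]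
      simp [hv]
    have h0 : eval v g * ((t ^ j - 1) * (t ^ (-i) - 1)) = 0 := by
      rw [← hfactor, hev f]; exact stepA t
    have hj1 : (t ^ j - 1) ≠ 0 := sub_ne_zero.2 (zpow_ne_one_q ht hj)
    have hi1 : (t ^ (-i) - 1) ≠ 0 := sub_ne_zero.2 (zpow_ne_one_q ht (by omega))
    have := mul_ne_zero hj1 hi1
    rcases mul_eq_zero.1 h0 with h | h
    · rw [← hev g]; exact h
    · exact absurd h this
  -- Step C : turn into a polynomial identically vanishing on (1, ∞)
  set A0 := degreeOf 0 g with hA0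
  set N0 := degreeOf 1 g with hN0
  set M : ℤ := (A0 : ℤ) * j.natAbs + (N0 : ℤ) * i.natAbs with hM
  have hMnn : ∀ d ∈ g.support, 0 ≤ ψ d + M := by
    intro d hd
    have h0 : (d 0 : ℤ) ≤ (A0 : ℤ) := by
      have h : d 0 ≤ A0 := by
        rw [hA0, degreeOf_eq_sup]; exact Finset.le_sup (f := fun m : Fin 2 →₀ ℕ => m 0) hd
      exact_mod_cast h
    have h1 : (d 1 : ℤ) ≤ (N0 : ℤ) := by
      have h : d 1 ≤ N0 := by
        rw [hN0, degreeOf_eq_sup]; exact Finset.le_sup (f := fun m : Fin 2 →₀ ℕ => m 1) hd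
      exact_mod_cast h
    have hd0 : (0 : ℤ) ≤ (d 0 : ℤ) := Int.natCast_nonneg _
    have hd1 : (0 : ℤ) ≤ (d 1 : ℤ) := Int.natCast_nonneg _
    have hJ1 : -(j.natAbs : ℤ) ≤ j := by omega
    have hI1 : i ≤ (i.natAbs : ℤ) := by omega
    have hJ0 : (0 : ℤ) ≤ (j.natAbs : ℤ) := Int.natCast_nonneg _
    have hI0 : (0 : ℤ) ≤ (i.natAbs : ℤ) := Int.natCast_nonneg _
    have p1 : (d 0 : ℤ) * (-(j.natAbs : ℤ)) ≤ (d 0 : ℤ) * j :=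
      mul_le_mul_of_nonneg_left hJ1 hd0
    have p2 : (d 1 : ℤ) * i ≤ (d 1 : ℤ) * (i.natAbs : ℤ) :=
      mul_le_mul_of_nonneg_left hI1 hd1
    have p3 : (d 0 : ℤ) * (j.natAbs : ℤ) ≤ (A0 : ℤ) * (j.natAbs : ℤ) :=
      mul_le_mul_of_nonneg_right h0 hJ0
    have p4 : (d 1 : ℤ) * (i.natAbs : ℤ) ≤ (N0 : ℤ) * (i.natAbs : ℤ) :=
      mul_le_mul_of_nonneg_right h1 hI0
    simp only [hψ, hM]
    nlinarith [p1, p2, p3, p4]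
  set Q : Polynomial ℚ :=
    ∑ d ∈ g.support, Polynomial.C (coeff d g) * Polynomial.X ^ (ψ d + M).toNat with hQ
  have hQeval : ∀ t : ℚ, 1 < t → Q.eval t = 0 := by
    intro t ht
    have ht0 : (0 : ℚ) < t := lt_trans one_pos ht
    have hQe : Q.eval t = (∑ d ∈ g.support, coeff d g * t ^ ψ d) * t ^ M := by
      rw [hQ, Polynomial.eval_finset_sum, Finset.sum_mul]
      refine Finset.sum_congr rfl fun d hd => ?_
      rw [Polynomial.eval_mul, Polynomial.eval_C, Polynomial.eval_pow, Polynomial.eval_X,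
        mul_assoc]
      congr 1
      rw [← zpow_natCast t, Int.toNat_of_nonneg (hMnn d hd), zpow_add₀ (ne_of_gt ht0)]
    rw [hQe, stepB t ht, zero_mul]
  have hQ0 : Q = 0 := by
    refine Polynomial.eq_zero_of_infinite_isRoot _ (Set.Infinite.mono ?_ (Set.Ioi_infinite 1))
    intro t ht
    exact hQeval t ht
  have hQ1 : Q.eval 1 = ∑ d ∈ g.support, coeff d g := by
    rw [hQ, Polynomial.eval_finset_sum]
    simp
  rw [hQ0] at hQ1
  simp only [Polynomial.eval_zero] at hQ1
  apply harea
  rw [← eval_one_gpoly w, ← hg, eval_one_eq_sum, ← hQ1]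
open Finset MvPolynomial

-- Vandermonde-style induction: vanishing power sums have zero coefficients
private lemma key_vanish : ∀ (T : Finset ℂ), (∀ t ∈ T, t ≠ 0) →
    ∀ C : ℂ → ℂ, (∀ k : ℕ, 1 ≤ k → ∑ t ∈ T, C t * t ^ k = 0) → ∀ t ∈ T, C t = 0 := by
  intro T
  induction T using Finset.induction with
  | empty => simp
  | @insert a T' ha ih =>
    intro h0 C hC
    have hT' : ∀ t ∈ T', C t = 0 := by
      intro t ht'
      have key := ih (fun x hx => h0 x (Finset.mem_insert_of_mem hx))
        (fun x => C x * (x - a)) ?_ t ht'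
      · have hta : t - a ≠ 0 := sub_ne_zero.2 (by rintro rfl; exact ha ht')
        rcases mul_eq_zero.1 key with h | h
        · exact h
        · exact absurd h hta
      · intro k hk
        have h1 := hC k hk
        have h2 := hC (k + 1) (by omega)
        rw [Finset.sum_insert ha] at h1 h2
        have e1 : ∑ t ∈ T', C t * t ^ k = -(C a * a ^ k) := by linear_combination h1
        have e2 : ∑ t ∈ T', C t * t ^ (k + 1) = -(C a * a ^ (k + 1)) := by
          linear_combination h2
        calc ∑ t ∈ T', (fun x => C x * (x - a)) t * t ^ k
            = ∑ t ∈ T', (C t * t ^ (k + 1) - a * (C t * t ^ k)) :=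
              Finset.sum_congr rfl fun t _ => by ring
          _ = (∑ t ∈ T', C t * t ^ (k + 1)) - a * ∑ t ∈ T', C t * t ^ k := by
              rw [Finset.sum_sub_distrib, Finset.mul_sum]
          _ = 0 := by rw [e1, e2]; ring
    have hCa : C a = 0 := by
      have h1 := hC 1 (le_refl 1)
      rw [Finset.sum_insert ha] at h1
      have hz : ∑ t ∈ T', C t * t ^ 1 = 0 :=
        Finset.sum_eq_zero fun t ht => by rw [hT' t ht, zero_mul]
      rw [hz, add_zero] at h1
      have haz : a ≠ 0 := h0 a (Finset.mem_insert_self a T')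
      have : C a * a = 0 := by rw [pow_one] at h1; exact h1
      rcases mul_eq_zero.1 this with h | h
      · exact h
      · exact absurd h haz
    intro t ht
    rcases Finset.mem_insert.1 ht with rfl | ht'
    · exact hCa
    · exact hT' t ht'

-- class sums vanish
private lemma class_sums {ι : Type*} [DecidableEq ι] (S : Finset ι) (z : ι → ℂ) (c : ι → ℂ)
    (h0 : ∀ s ∈ S, z s ≠ 0)
    (h : ∀ k : ℕ, 1 ≤ k → ∑ s ∈ S, c s * z s ^ k = 0) :
    ∀ s₀ ∈ S, ∑ s ∈ S.filter (fun s => z s = z s₀), c s = 0 := by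
  have key := key_vanish (S.image z)
    (by intro t ht; obtain ⟨s, hs, rfl⟩ := Finset.mem_image.1 ht; exact h0 s hs)
    (fun t => ∑ s ∈ S.filter (fun s => z s = t), c s) ?_
  · intro s₀ hs₀
    exact key (z s₀) (Finset.mem_image_of_mem _ hs₀)
  · intro k hk
    rw [← h k hk]
    rw [← Finset.sum_fiberwise_of_maps_to (g := z) (fun s hs => Finset.mem_image_of_mem _ hs)
      (fun s => c s * z s ^ k)]
    refine Finset.sum_congr rfl fun t _ => ?_
    rw [Finset.sum_mul]
    refine Finset.sum_congr rfl fun s hs => ?_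
    rw [(Finset.mem_filter.1 hs).2]

private lemma powNatAbsEqOne {x : ℂ} {k : ℤ} (h : x ^ k = 1) : x ^ k.natAbs = 1 := by
  rcases Int.natAbs_eq k with h' | h'
  · rw [← zpow_natCast, ← h', h]
  · have hk : (k.natAbs : ℤ) = -k := by omega
    rw [← zpow_natCast, hk, zpow_neg, h, inv_one]

/-- If a ℚ-weighted lattice tile `T` in the first quadrant has nonzero weighted
area, `m` and `n` are the `X`- and `Y`-degrees of `f_T`, and `α, β ∈ ℂ^×`
satisfy `f_T(α^k, β^k) = 0` for all `k ≥ 1`, then `α^k = 1` or `β^k = 1` for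
some `1 ≤ k ≤ 2mn`. -/
theorem common_zeros_are_near_roots_of_unity (w : ℤ × ℤ →₀ ℚ)
    (hsupp : ∀ q ∈ w.support, 0 ≤ q.1 ∧ 0 ≤ q.2)
    (harea : (w.sum fun _ a => a) ≠ 0)
    (m n : ℕ)
    (hm : m = (firstQuadrantPolyQ w).degreeOf 0)
    (hn : n = (firstQuadrantPolyQ w).degreeOf 1)
    (α β : ℂ) (hα : α ≠ 0) (hβ : β ≠ 0)
    (hzero : ∀ k : ℕ, 1 ≤ k → aeval ![α ^ k, β ^ k] (firstQuadrantPolyQ w) = 0) :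
    (∃ k : ℕ, 1 ≤ k ∧ k ≤ 2 * m * n ∧ α ^ k = 1) ∨
      (∃ k : ℕ, 1 ≤ k ∧ k ≤ 2 * m * n ∧ β ^ k = 1) := by
  classical
  set f := firstQuadrantPolyQ w with hf
  obtain ⟨e, he, he0, he1⟩ := exists_corner w harea
  have hm1 : 1 ≤ m := by
    rw [hm, degreeOf_eq_sup]
    exact le_trans he0 (Finset.le_sup (f := fun s : Fin 2 →₀ ℕ => s 0) he)
  have hn1 : 1 ≤ n := by
    rw [hn, degreeOf_eq_sup]
    exact le_trans he1 (Finset.le_sup (f := fun s : Fin 2 →₀ ℕ => s 1) he)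
  have habs : ∀ s ∈ f.support, s 0 ≤ m ∧ s 1 ≤ n := by
    intro s hs
    constructor
    · rw [hm, degreeOf_eq_sup]; exact Finset.le_sup (f := fun s : Fin 2 →₀ ℕ => s 0) hs
    · rw [hn, degreeOf_eq_sup]; exact Finset.le_sup (f := fun s : Fin 2 →₀ ℕ => s 1) hs
  set z : (Fin 2 →₀ ℕ) → ℂ := fun s => α ^ (s 0) * β ^ (s 1) with hz
  have hz0 : ∀ s ∈ f.support, z s ≠ 0 :=
    fun s _ => mul_ne_zero (pow_ne_zero _ hα) (pow_ne_zero _ hβ)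
  have hpows : ∀ k : ℕ, 1 ≤ k → ∑ s ∈ f.support, ((coeff s f : ℚ) : ℂ) * z s ^ k = 0 := by
    intro k hk
    have h0 := hzero k hk
    rw [aeval_def, eval₂_eq'] at h0
    rw [← h0]
    refine Finset.sum_congr rfl fun d _ => ?_
    rw [Fin.prod_univ_two]
    have hv0 : (![α ^ k, β ^ k] : Fin 2 → ℂ) 0 = α ^ k := rfl
    have hv1 : (![α ^ k, β ^ k] : Fin 2 → ℂ) 1 = β ^ k := rfl
    rw [hv0, hv1]
    have : (algebraMap ℚ ℂ) (coeff d f) = ((coeff d f : ℚ) : ℂ) := by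
      exact eq_ratCast (algebraMap ℚ ℂ) _
    rw [this, hz]
    ring
  have Hclass := class_sums f.support z (fun s => ((coeff s f : ℚ) : ℂ)) hz0 hpows
  have hrel : ∀ s ∈ f.support, ∀ s' ∈ f.support, z s = z s' →
      α ^ ((s 0 : ℤ) - (s' 0 : ℤ)) * β ^ ((s 1 : ℤ) - (s' 1 : ℤ)) = 1 := by
    intro s _ s' _ hzz
    rw [zpow_sub₀ hα, zpow_sub₀ hβ, zpow_natCast, zpow_natCast, zpow_natCast, zpow_natCast]
    field_simp
    linear_combination hzz
  by_cases hsing : ∀ s ∈ f.support, ∀ s' ∈ f.support, z s = z s' → s = s'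
  · exfalso
    have hfe : f.support.filter (fun s => z s = z e) = {e} := by
      apply Finset.eq_singleton_iff_unique_mem.2
      refine ⟨Finset.mem_filter.2 ⟨he, rfl⟩, ?_⟩
      intro s hs
      obtain ⟨hs1, hs2⟩ := Finset.mem_filter.1 hs
      exact hsing s hs1 e he hs2
    have := Hclass e he
    rw [hfe, Finset.sum_singleton] at this
    have : coeff e f = 0 := by exact_mod_cast this
    exact (mem_support_iff.1 he) this
  · push_neg at hsing
    obtain ⟨s, hs, s', hs', hzz, hne⟩ := hsing
    have hne2 : ¬ (s 0 = s' 0 ∧ s 1 = s' 1) := by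
      rintro ⟨h1, h2⟩
      apply hne
      ext a
      fin_cases a
      · exact h1
      · exact h2
    set i : ℤ := (s 0 : ℤ) - (s' 0 : ℤ) with hi
    set j : ℤ := (s 1 : ℤ) - (s' 1 : ℤ) with hj
    have hr0 : α ^ i * β ^ j = 1 := hrel s hs s' hs' hzz
    have hsm := habs s hs
    have hsm' := habs s' hs'
    have him : i.natAbs ≤ m := by omega
    have hjn : j.natAbs ≤ n := by omega
    by_cases hj0 : j = 0
    · -- α case
      have hi0 : i ≠ 0 := by omega
      rw [hj0, zpow_zero, mul_one] at hr0
      refine Or.inl ⟨i.natAbs, by omega, ?_, powNatAbsEqOne hr0⟩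
      calc i.natAbs ≤ m := him
        _ ≤ 2 * m * n := by nlinarith
    · by_cases hi0 : i = 0
      · rw [hi0, zpow_zero, one_mul] at hr0
        refine Or.inr ⟨j.natAbs, by omega, ?_, powNatAbsEqOne hr0⟩
        calc j.natAbs ≤ n := hjn
          _ ≤ 2 * m * n := by nlinarith
      · by_cases hpar : ∀ t ∈ f.support, ∀ t' ∈ f.support, z t = z t' →
            ((t 0 : ℤ) - (t' 0 : ℤ)) * j = ((t 1 : ℤ) - (t' 1 : ℤ)) * i
        · exfalso
          apply parallel_contradiction w harea i j hi0 hj0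
          intro q
          set A := f.support.filter (fun s => (s 0 : ℤ) * j - (s 1 : ℤ) * i = q) with hA
          have hcast : ((∑ s ∈ A, coeff s f : ℚ) : ℂ) = 0 := by
            push_cast
            rw [← Finset.sum_fiberwise_of_maps_to (g := z) (t := A.image z)
              (fun s hs => Finset.mem_image_of_mem _ hs) (fun s => ((coeff s f : ℚ) : ℂ))]
            refine Finset.sum_eq_zero fun t ht => ?_
            obtain ⟨s₀, hs₀A, rfl⟩ := Finset.mem_image.1 ht
            have hs₀m := Finset.mem_filter.1 hs₀A
            have hfilter : A.filter (fun s => z s = z s₀)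
                = f.support.filter (fun s => z s = z s₀) := by
              ext x
              constructor
              · intro hx
                have hx1 := Finset.mem_filter.1 hx
                have hx2 := Finset.mem_filter.1 hx1.1
                exact Finset.mem_filter.2 ⟨hx2.1, hx1.2⟩
              · intro hx
                have hx1 := Finset.mem_filter.1 hx
                refine Finset.mem_filter.2 ⟨Finset.mem_filter.2 ⟨hx1.1, ?_⟩, hx1.2⟩
                have hp := hpar x hx1.1 s₀ hs₀m.1 hx1.2
                linear_combination hp + hs₀m.2
            rw [hfilter]
            exact Hclass s₀ hs₀m.1
          exact_mod_cast hcast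
        · push_neg at hpar
          obtain ⟨t, ht, t', ht', hzt, hdet⟩ := hpar
          set i' : ℤ := (t 0 : ℤ) - (t' 0 : ℤ) with hi'
          set j' : ℤ := (t 1 : ℤ) - (t' 1 : ℤ) with hj'
          have hr1 : α ^ i' * β ^ j' = 1 := hrel t ht t' ht' hzt
          have htm := habs t ht
          have htm' := habs t' ht'
          have him' : i'.natAbs ≤ m := by omega
          have hjn' : j'.natAbs ≤ n := by omega
          set K : ℤ := i * j' - i' * j with hK
          have hK0 : K ≠ 0 := by
            intro h
            apply hdet
            linear_combination -h
          have e1 : α ^ (i * j') * β ^ (j * j') = 1 := by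
            have h1 : (α ^ i * β ^ j) ^ j' = 1 := by rw [hr0, one_zpow]
            rw [mul_zpow, ← zpow_mul, ← zpow_mul] at h1
            exact h1
          have e2 : α ^ (i' * j) * β ^ (j * j') = 1 := by
            have h1 : (α ^ i' * β ^ j') ^ j = 1 := by rw [hr1, one_zpow]
            rw [mul_zpow, ← zpow_mul, ← zpow_mul, mul_comm j' j] at h1
            exact h1
          have hβne : β ^ (j * j') ≠ 0 := zpow_ne_zero _ hβ
          have e3 : α ^ (i * j') = α ^ (i' * j) :=
            mul_right_cancel₀ hβne (by rw [e1, e2])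
          have e4 : α ^ K = 1 := by
            rw [hK, zpow_sub₀ hα, e3, div_self (zpow_ne_zero _ hα)]
          have b1 : i.natAbs * j'.natAbs ≤ m * n := Nat.mul_le_mul him hjn'
          have b2 : i'.natAbs * j.natAbs ≤ m * n := Nat.mul_le_mul him' hjn
          have bK : K.natAbs ≤ 2 * m * n := by
            have h1 := Int.natAbs_sub_le (i * j') (i' * j)
            rw [Int.natAbs_mul, Int.natAbs_mul] at h1
            have h2 : 2 * m * n = m * n + m * n := by ring
            omega
          exact Or.inl ⟨K.natAbs, by omega, bK, powNatAbsEqOne e4⟩
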